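/- For all natural numbers k and n, Δ(k+1,n+1) + M(k,n)·(k+1) + 1 = Δ(k+1,n) + M(k+1,n)·(k+2). -/

import Mathlib

def gAux : ℕ → ℕ → ℕ → ℕ → ℕ
  | 0, i, x, n => i * (n + 2) + x + 1
  | m + 1, i, x, n =>
      (∑ a ∈ Finset.range (x + 1), gAux m i a n) +
        ∑ j ∈ Finset.range i, ∑ a ∈ Finset.range (n + 1 - m), gAux m j a n

def g (i m x n : ℕ) : ℕ := gAux m i x n

def Δ (i n : ℕ) : ℕ := ∑ m ∈ Finset.range (n + 1), ∑ x ∈ Finset.range (n + 1 - m), g i m x n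

def M (k n : ℕ) : ℕ := (k + 1) * (n + 2) + 1 + ∑ i ∈ Finset.range (k + 1), Δ i n

open Finset

/-- hockey stick -/
lemma hockey (r : ℕ) : ∀ N, ∑ a ∈ Finset.range N, (a + r).choose r = (N + r).choose (r + 1) := by
  intro N
  induction N with
  | zero => simp [Nat.choose_eq_zero_of_lt]
  | succ N ih =>
    rw [Finset.sum_range_succ, ih]
    have h : N + 1 + r = (N + r) + 1 := by omega
    rw [h, Nat.choose_succ_succ' (N + r) r]
    omega

lemma sum_shift_topbot (f : ℕ → ℕ) (N : ℕ) :
    ∑ x ∈ Finset.range (N + 2), f x = (∑ x ∈ Finset.range N, f (x + 1)) + f (N + 1) + f 0 := by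
  show ∑ x ∈ Finset.range (N + 1 + 1), f x = _
  rw [Finset.sum_range_succ' f (N + 1), Finset.sum_range_succ (fun x => f (x + 1)) N]

lemma sum_shift_botbot (f : ℕ → ℕ) (N : ℕ) :
    ∑ x ∈ Finset.range (N + 2), f x = (∑ x ∈ Finset.range N, f (x + 2)) + f 1 + f 0 := by
  show ∑ x ∈ Finset.range (N + 1 + 1), f x = _
  rw [Finset.sum_range_succ' f (N + 1), Finset.sum_range_succ' (fun x => f (x + 1)) N]

/-- closed form for gAux -/
def CF (m i x n : ℕ) : ℕ :=
  (x + (m + 1)).choose (m + 1) +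
    ∑ t ∈ Finset.range (m + 1), i ^ (t + 1) * (n + 2).choose (t + 1) * (x + (m - t)).choose (m - t)

lemma sum_CF (n m N j : ℕ) (hg : ∀ i x, gAux m i x n = CF m i x n) :
    ∑ a ∈ Finset.range N, gAux m j a n =
      (N + (m + 1)).choose (m + 2) +
        ∑ t ∈ Finset.range (m + 1),
          j ^ (t + 1) * (n + 2).choose (t + 1) * (N + (m - t)).choose (m - t + 1) := by
  simp only [hg, CF]
  rw [Finset.sum_add_distrib, hockey (m + 1) N, Finset.sum_comm]
  congr 1
  refine Finset.sum_congr rfl fun t ht => ?_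
  rw [← Finset.mul_sum, hockey (m - t) N]

lemma S_lemma (n m : ℕ) (hmn : m ≤ n) (hg : ∀ i x, gAux m i x n = CF m i x n) (j : ℕ) :
    (∑ a ∈ Finset.range (n + 1 - m), gAux m j a n) + (n + 2).choose (m + 2) * j ^ (m + 2) =
      (n + 2).choose (m + 2) * (j + 1) ^ (m + 2) := by
  rw [sum_CF n m (n + 1 - m) j hg]
  have h1 : n + 1 - m + (m + 1) = n + 2 := by omega
  rw [h1]
  have h2 : ∑ t ∈ Finset.range (m + 1),
      j ^ (t + 1) * (n + 2).choose (t + 1) * (n + 1 - m + (m - t)).choose (m - t + 1)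
      = ∑ t ∈ Finset.range (m + 1),
      (n + 2).choose (m + 2) * (j ^ (t + 1) * (m + 2).choose (t + 1)) := by
    refine Finset.sum_congr rfl fun t ht => ?_
    have htm : t ≤ m := by simpa [Nat.lt_succ_iff] using Finset.mem_range.mp ht
    have e1 : n + 1 - m + (m - t) = (n + 2) - (t + 1) := by omega
    have e2 : m - t + 1 = (m + 2) - (t + 1) := by omega
    rw [e1, e2]
    have key := Nat.choose_mul (n := n + 2) (k := m + 2) (s := t + 1)
      (by omega)
    calc j ^ (t + 1) * (n + 2).choose (t + 1) * ((n + 2 - (t + 1)).choose (m + 2 - (t + 1)))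
        = (n + 2).choose (t + 1) * (n + 2 - (t + 1)).choose (m + 2 - (t + 1)) * j ^ (t + 1) := by
          ring
      _ = (n + 2).choose (m + 2) * (m + 2).choose (t + 1) * j ^ (t + 1) := by rw [← key]
      _ = (n + 2).choose (m + 2) * (j ^ (t + 1) * (m + 2).choose (t + 1)) := by ring
  rw [h2, ← Finset.mul_sum]
  have h := add_pow j 1 (m + 2)
  simp only [one_pow, mul_one, Nat.cast_id] at h
  rw [show m + 2 + 1 = (m + 1) + 2 from rfl] at h
  rw [sum_shift_topbot (fun x => j ^ x * (m + 2).choose x) (m + 1)] at h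
  rw [show m + 1 + 1 = m + 2 from rfl, Nat.choose_self, Nat.choose_zero_right] at h
  simp only [mul_one, pow_zero] at h
  rw [h]
  ring

lemma Ssum (n m : ℕ) (hmn : m ≤ n) (hg : ∀ i x, gAux m i x n = CF m i x n) :
    ∀ i, ∑ j ∈ Finset.range i, ∑ a ∈ Finset.range (n + 1 - m), gAux m j a n =
      (n + 2).choose (m + 2) * i ^ (m + 2) := by
  intro i
  induction i with
  | zero => simp [pow_succ]
  | succ i ih =>
    rw [Finset.sum_range_succ, ih]
    have h := S_lemma n m hmn hg i
    linarith

lemma gAux_closed (n : ℕ) : ∀ m, m ≤ n → ∀ i x, gAux m i x n = CF m i x n := by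
  intro m
  induction m with
  | zero =>
    intro _ i x
    simp [gAux, CF, Nat.choose_one_right]
    ring
  | succ m ih =>
    intro hm i x
    have hmn : m ≤ n := by omega
    have hg := ih hmn
    have lhs : gAux (m + 1) i x n =
        ((x + 1 + (m + 1)).choose (m + 2) +
          ∑ t ∈ Finset.range (m + 1),
            i ^ (t + 1) * (n + 2).choose (t + 1) * (x + 1 + (m - t)).choose (m - t + 1))
        + (n + 2).choose (m + 2) * i ^ (m + 2) := by
      show (∑ a ∈ Finset.range (x + 1), gAux m i a n) +
          ∑ j ∈ Finset.range i, ∑ a ∈ Finset.range (n + 1 - m), gAux m j a n = _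
      rw [sum_CF n m (x + 1) i hg, Ssum n m hmn hg i]
    rw [lhs, CF]
    rw [Finset.sum_range_succ
      (fun t => i ^ (t + 1) * (n + 2).choose (t + 1) *
        (x + (m + 1 - t)).choose (m + 1 - t)) (m + 1)]
    have e1 : ∑ t ∈ Finset.range (m + 1),
        i ^ (t + 1) * (n + 2).choose (t + 1) * (x + (m + 1 - t)).choose (m + 1 - t)
        = ∑ t ∈ Finset.range (m + 1),
        i ^ (t + 1) * (n + 2).choose (t + 1) * (x + 1 + (m - t)).choose (m - t + 1) := by
      refine Finset.sum_congr rfl fun t ht => ?_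
      have htm : t ≤ m := by simpa [Nat.lt_succ_iff] using Finset.mem_range.mp ht
      have e2 : m + 1 - t = m - t + 1 := by omega
      have e3 : x + (m - t + 1) = x + 1 + (m - t) := by omega
      rw [e2, e3]
    rw [e1]
    have e0 : x + 1 + (m + 1) = x + (m + 1 + 1) := by omega
    rw [e0, Nat.sub_self]
    simp only [Nat.choose_zero_right, Nat.add_zero, mul_one]
    ring

def F (n y : ℕ) : ℕ := ∑ m ∈ Finset.range (n + 1), (n + 2).choose (m + 2) * y ^ (m + 2)

lemma Delta_F (i n : ℕ) : Δ i n + F n i = F n (i + 1) := by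
  unfold Δ F
  simp only [g]
  rw [← Finset.sum_add_distrib]
  refine Finset.sum_congr rfl fun m hm => ?_
  have hmn : m ≤ n := by simpa [Nat.lt_succ_iff] using Finset.mem_range.mp hm
  exact S_lemma n m hmn (gAux_closed n m hmn) i

lemma F_eq (n y : ℕ) : F n y + ((n + 2) * y + 1) = (y + 1) ^ (n + 2) := by
  have h := add_pow y 1 (n + 2)
  simp only [one_pow, mul_one, Nat.cast_id] at h
  rw [show n + 2 + 1 = (n + 1) + 2 from rfl] at h
  rw [sum_shift_botbot (fun x => y ^ x * (n + 2).choose x) (n + 1)] at h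
  simp only [pow_zero, pow_one, Nat.choose_zero_right, Nat.choose_one_right, mul_one, one_mul] at h
  rw [h]
  unfold F
  rw [Finset.sum_congr rfl fun t _ => mul_comm ((n + 2).choose (t + 2)) (y ^ (t + 2))]
  ring

lemma Delta_closed (i n : ℕ) :
    Δ i n + (i + 1) ^ (n + 2) + (n + 2) = (i + 2) ^ (n + 2) := by
  have h1 := Delta_F i n
  have h2 := F_eq n i
  have h3 := F_eq n (i + 1)
  have hb : (n + 2) * (i + 1) = (n + 2) * i + (n + 2) := by ring
  rw [show i + 1 + 1 = i + 2 from rfl] at h3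
  linarith

lemma Fsum (n : ℕ) : ∀ K, ∑ i ∈ Finset.range K, Δ i n = F n K := by
  intro K
  induction K with
  | zero => simp [F, pow_succ]
  | succ K ih =>
    rw [Finset.sum_range_succ, ih]
    have := Delta_F K n
    linarith

lemma M_closed (k n : ℕ) : M k n = (k + 2) ^ (n + 2) := by
  unfold M
  rw [Fsum n (k + 1)]
  have h := F_eq n (k + 1)
  rw [show k + 1 + 1 = k + 2 from rfl] at h
  have hc : (k + 1) * (n + 2) = (n + 2) * (k + 1) := by ring
  linarith

theorem delta_M_identity (k n : ℕ) :
    Δ (k + 1) (n + 1) + M k n * (k + 1) + 1 = Δ (k + 1) n + M (k + 1) n * (k + 2) := by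
  rw [M_closed, M_closed]
  have hA := Delta_closed (k + 1) (n + 1)
  have hB := Delta_closed (k + 1) n
  rw [show k + 1 + 1 = k + 2 from rfl, show k + 1 + 2 = k + 3 from rfl,
    show n + 1 + 2 = n + 3 from rfl] at hA
  rw [show k + 1 + 1 = k + 2 from rfl, show k + 1 + 2 = k + 3 from rfl] at hB
  rw [show k + 1 + 2 = k + 3 from rfl]
  have p1 : (k + 2) ^ (n + 3) = (k + 2) ^ (n + 2) * (k + 1) + (k + 2) ^ (n + 2) := by ring
  have p2 : (k + 3) ^ (n + 3) = (k + 3) ^ (n + 2) * (k + 2) + (k + 3) ^ (n + 2) := by ring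
  linarith
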